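/- The graph \widetilde{K}_{2m} — the graph on 2m+1 vertices consisting of a complete graph K_{2m} together with one extra vertex adjacent to exactly m vertices of the K_{2m} — has smallest eigenvalue less than −2 provided m is sufficiently large; in particular, \widetilde{K}_{24} (m = 12) has smallest eigenvalue less than −3. -/

import Mathlib

open Matrix

/-- The adjacency matrix of `K̃_{2m}`: vertices `0, …, 2m-1` form a clique and the extra
vertex `2m` is adjacent to exactly the vertices `0, …, m-1`. -/
def KtildeAdj (m : ℕ) : Matrix (Fin (2 * m + 1)) (Fin (2 * m + 1)) ℝ :=
  Matrix.of fun i j =>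
    if i = j then 0
    else if i.val < 2 * m ∧ j.val < 2 * m then 1
    else if (i.val = 2 * m ∧ j.val < m) ∨ (j.val = 2 * m ∧ i.val < m) then 1
    else 0

section Rayleigh

/-- If the Rayleigh quotient of some vector is `< c`, then some eigenvalue is `< c`. -/
lemma exists_eigenvalue_lt {n : ℕ} {A : Matrix (Fin n) (Fin n) ℝ} (hA : A.IsHermitian)
    {x : Fin n → ℝ} {c : ℝ} (h : dotProduct x (A *ᵥ x) < c * dotProduct x x) :
    ∃ i, hA.eigenvalues i < c := by
  by_contra hc
  push_neg at hc
  set U : Matrix (Fin n) (Fin n) ℝ := (hA.eigenvectorUnitary : Matrix (Fin n) (Fin n) ℝ) with hU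
  have hUU : U * star U = 1 := Matrix.mem_unitaryGroup_iff.mp hA.eigenvectorUnitary.2
  have hstar : star U = Uᵀ := by
    rw [Matrix.star_eq_conjTranspose, Matrix.conjTranspose_eq_transpose_of_trivial]
  set y : Fin n → ℝ := Uᵀ *ᵥ x with hy
  have hof : (RCLike.ofReal ∘ hA.eigenvalues : Fin n → ℝ) = hA.eigenvalues := rfl
  have hAx : A *ᵥ x = U *ᵥ ((diagonal hA.eigenvalues) *ᵥ y) := by
    conv_lhs => rw [hA.spectral_theorem]
    rw [Unitary.conjStarAlgAut_apply, ← hU, hof, hstar, ← mulVec_mulVec, ← mulVec_mulVec]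
  have hQ : dotProduct x (A *ᵥ x) = ∑ i, hA.eigenvalues i * (y i * y i) := by
    rw [hAx, Matrix.dotProduct_mulVec, ← Matrix.mulVec_transpose, ← hy]
    simp only [dotProduct, Matrix.mulVec_diagonal]
    exact Finset.sum_congr rfl fun i _ => by ring
  have hN : dotProduct x x = ∑ i, y i * y i := by
    have hyy : dotProduct y y = dotProduct x x := by
      rw [hy, Matrix.dotProduct_mulVec, Matrix.vecMul_transpose, mulVec_mulVec,
        ← hstar, hUU, one_mulVec]
    rw [← hyy]; rfl
  rw [hQ, hN, Finset.mul_sum] at h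
  have : ∑ i, c * (y i * y i) ≤ ∑ i, hA.eigenvalues i * (y i * y i) :=
    Finset.sum_le_sum fun i _ => mul_le_mul_of_nonneg_right (hc i) (mul_self_nonneg _)
  linarith

lemma iInf_eigenvalues_lt {n : ℕ} {A : Matrix (Fin (n + 1)) (Fin (n + 1)) ℝ}
    (hA : A.IsHermitian) {x : Fin (n + 1) → ℝ} {c : ℝ}
    (h : dotProduct x (A *ᵥ x) < c * dotProduct x x) :
    (⨅ i, hA.eigenvalues i) < c := by
  obtain ⟨i, hi⟩ := exists_eigenvalue_lt hA h
  exact lt_of_le_of_lt (ciInf_le (Set.finite_range _).bddBelow i) hi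

end Rayleigh

section Computation

/-- The test vector: `a` on the first `m` clique vertices, `b` on the rest of the clique,
`c` on the extra vertex. -/
def xvec (m : ℕ) (a b c : ℝ) : Fin (2 * m + 1) → ℝ :=
  fun i => if (i : ℕ) < m then a else if (i : ℕ) < 2 * m then b else c

lemma sum_piece (m : ℕ) (p q r : ℝ) :
    ∑ i : Fin (2 * m + 1), (if (i : ℕ) < m then p else if (i : ℕ) < 2 * m then q else r)
      = m * p + m * q + r := by
  rw [Fin.sum_univ_eq_sum_range (fun k => if k < m then p else if k < 2 * m then q else r),
    show 2 * m + 1 = m + (m + 1) by omega, Finset.sum_range_add]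
  have h1 : ∑ i ∈ Finset.range m,
      (if i < m then p else if i < 2 * m then q else r) = m * p := by
    rw [Finset.sum_congr rfl fun i hi => if_pos (Finset.mem_range.mp hi)]
    simp [mul_comm]
  have h2 : ∑ i ∈ Finset.range (m + 1),
      (if m + i < m then p else if m + i < 2 * m then q else r) = m * q + r := by
    rw [Finset.sum_range_succ]
    have e1 : ∀ i ∈ Finset.range m,
        (if m + i < m then p else if m + i < 2 * m then q else r) = q := by
      intro i hi
      have := Finset.mem_range.mp hi
      rw [if_neg (by omega), if_pos (by omega)]
    rw [Finset.sum_congr rfl e1, if_neg (by omega), if_neg (by omega)]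
    simp [mul_comm]
  rw [h1, h2]; ring

lemma xvec_dot_self (m : ℕ) (a b c : ℝ) :
    dotProduct (xvec m a b c) (xvec m a b c) = m * (a * a) + m * (b * b) + c * c := by
  have : ∀ i : Fin (2 * m + 1), xvec m a b c i * xvec m a b c i
      = if (i : ℕ) < m then a * a else if (i : ℕ) < 2 * m then b * b else c * c := by
    intro i; unfold xvec; split_ifs <;> try ring
  rw [dotProduct, Finset.sum_congr rfl fun i _ => this i, sum_piece]

lemma sum_xvec (m : ℕ) (a b c : ℝ) :
    ∑ j, xvec m a b c j = m * a + m * b + c := by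
  unfold xvec; rw [sum_piece]

lemma mulVec_xvec (m : ℕ) (a b c : ℝ) (i : Fin (2 * m + 1)) :
    (KtildeAdj m *ᵥ xvec m a b c) i =
      if (i : ℕ) < m then m * a + m * b + c - a
      else if (i : ℕ) < 2 * m then m * a + m * b - b
      else m * a := by
  have hi : (i : ℕ) < 2 * m + 1 := i.isLt
  rcases lt_or_ge (i : ℕ) m with h1 | h1
  · -- i < m : adjacent to everything except itself
    have key : ∀ j : Fin (2 * m + 1), KtildeAdj m i j * xvec m a b c j =
        xvec m a b c j - (if j = i then xvec m a b c j else 0) := by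
      intro j
      have hj : (j : ℕ) < 2 * m + 1 := j.isLt
      unfold KtildeAdj xvec
      simp only [Matrix.of_apply, Fin.ext_iff]
      split_ifs <;> (first | ring1 | (exfalso; omega))
    rw [Matrix.mulVec, dotProduct, Finset.sum_congr rfl fun j _ => key j,
      Finset.sum_sub_distrib, Finset.sum_ite_eq' Finset.univ i (xvec m a b c)]
    simp only [Finset.mem_univ, if_true, sum_xvec]
    have : xvec m a b c i = a := by unfold xvec; rw [if_pos h1]
    rw [this, if_pos h1]
  · rcases lt_or_ge (i : ℕ) (2 * m) with h2 | h2
    · -- m ≤ i < 2m : adjacent to the clique minus itself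
      have key : ∀ j : Fin (2 * m + 1), KtildeAdj m i j * xvec m a b c j =
          (if (j : ℕ) < m then a else if (j : ℕ) < 2 * m then b else 0)
            - (if j = i then xvec m a b c j else 0) := by
        intro j
        have hj : (j : ℕ) < 2 * m + 1 := j.isLt
        unfold KtildeAdj xvec
        simp only [Matrix.of_apply, Fin.ext_iff]
        split_ifs <;> (first | ring1 | (exfalso; omega))
      rw [Matrix.mulVec, dotProduct, Finset.sum_congr rfl fun j _ => key j,
        Finset.sum_sub_distrib, Finset.sum_ite_eq' Finset.univ i (xvec m a b c),
        sum_piece]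
      simp only [Finset.mem_univ, if_true]
      have : xvec m a b c i = b := by unfold xvec; rw [if_neg (by omega), if_pos h2]
      rw [this, if_neg (by omega), if_pos h2]; ring
    · -- i = 2m : adjacent to the first m vertices
      have hi2m : (i : ℕ) = 2 * m := by omega
      have key : ∀ j : Fin (2 * m + 1), KtildeAdj m i j * xvec m a b c j =
          (if (j : ℕ) < m then a else if (j : ℕ) < 2 * m then 0 else 0) := by
        intro j
        have hj : (j : ℕ) < 2 * m + 1 := j.isLt
        unfold KtildeAdj xvec
        simp only [Matrix.of_apply, Fin.ext_iff]
        split_ifs <;> (first | ring1 | (exfalso; omega))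
      rw [Matrix.mulVec, dotProduct, Finset.sum_congr rfl fun j _ => key j, sum_piece]
      rw [if_neg (by omega), if_neg (by omega)]; ring

lemma xvec_quadform (m : ℕ) (a b c : ℝ) :
    dotProduct (xvec m a b c) (KtildeAdj m *ᵥ xvec m a b c) =
      m * (a * (m * a + m * b + c - a)) + m * (b * (m * a + m * b - b)) + c * (m * a) := by
  have key : ∀ i : Fin (2 * m + 1), xvec m a b c i * (KtildeAdj m *ᵥ xvec m a b c) i =
      if (i : ℕ) < m then a * (m * a + m * b + c - a)
      else if (i : ℕ) < 2 * m then b * (m * a + m * b - b)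
      else c * (m * a) := by
    intro i
    rw [mulVec_xvec]
    unfold xvec
    split_ifs <;> ring
  rw [dotProduct, Finset.sum_congr rfl fun i _ => key i, sum_piece]

end Computation

/-- `K̃_{2m}` has smallest eigenvalue less than `-2` for all sufficiently large `m`; in
particular `K̃_{24}` (the case `m = 12`) has smallest eigenvalue less than `-3`. -/
theorem stmt_14 (hH : ∀ m, (KtildeAdj m).IsHermitian) :
    (∃ M : ℕ, ∀ m, M ≤ m → (⨅ i, (hH m).eigenvalues i) < -2) ∧
    (⨅ i, (hH 12).eigenvalues i) < -3 := by
  constructor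
  · refine ⟨5, fun m hm => ?_⟩
    apply iInf_eigenvalues_lt (hH m) (x := xvec m 1 (-1) (-2))
    rw [xvec_quadform, xvec_dot_self]
    have : (5 : ℝ) ≤ m := by exact_mod_cast hm
    nlinarith
  · apply iInf_eigenvalues_lt (hH 12) (x := xvec 12 20 (-17) (-78))
    rw [xvec_quadform, xvec_dot_self]
    norm_num
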